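/- Suppose n has l-bounded gaps and B is a basis that is C_{q,t}-n-t-quasi-greedy and has the n-UL property with constants C₁, C₂. If B is Δ_d-n-democratic, then B is C-t-quasi-greedy with C ≤ max{α₁α₂n₁, C_{q,t}(1 + (l−1)C₁C₂Δ_d)}. -/

import Mathlib

open Finset

/-- Selecting the `s` elements of `A` with largest `g`-values. -/
lemma stmt8_exists_top_subset (g : ℕ → ℝ) (A : Finset ℕ) :
    ∀ s, s ≤ A.card → ∃ B, B ⊆ A ∧ B.card = s ∧
      ∀ i ∈ B, ∀ j ∈ A, j ∉ B → g j ≤ g i := by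
  intro s
  induction s with
  | zero => exact fun _ => ⟨∅, empty_subset _, rfl, by simp⟩
  | succ s ih =>
    intro hs
    obtain ⟨B, hBA, hBcard, hB⟩ := ih (Nat.le_of_succ_le hs)
    have hne : (A \ B).Nonempty := by
      rw [← Finset.card_pos, Finset.card_sdiff_of_subset hBA]; omega
    obtain ⟨j₀, hj₀, hmax⟩ := Finset.exists_max_image (A \ B) g hne
    have hj₀A := (Finset.mem_sdiff.mp hj₀).1
    have hj₀B := (Finset.mem_sdiff.mp hj₀).2
    refine ⟨insert j₀ B, Finset.insert_subset hj₀A hBA,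
      by rw [Finset.card_insert_of_notMem hj₀B, hBcard], ?_⟩
    intro i hi j hjA hjB'
    have hjB : j ∉ B := fun h => hjB' (Finset.mem_insert_of_mem h)
    rcases Finset.mem_insert.mp hi with rfl | hiB
    · exact hmax j (Finset.mem_sdiff.mpr ⟨hjA, hjB⟩)
    · exact hB i hiB j hjA hjB

/-- If every set of at most `nk` indices has projection norm at most `D`, then a set of
at most `q * nk` indices has projection norm at most `q * D`. -/
lemma stmt8_block_bound {X : Type*} [NormedAddCommGroup X] (v : ℕ → X) (nk : ℕ)
    (D : ℝ) (hD : 0 ≤ D)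
    (hblock : ∀ S : Finset ℕ, S.card ≤ nk → ‖∑ i ∈ S, v i‖ ≤ D) :
    ∀ q (S : Finset ℕ), S.card ≤ q * nk → ‖∑ i ∈ S, v i‖ ≤ q * D := by
  intro q
  induction q with
  | zero =>
    intro S hS
    simp only [Nat.zero_mul, Nat.le_zero] at hS
    simp [Finset.card_eq_zero.mp hS]
  | succ q ih =>
    intro S hS
    by_cases h0 : S.card ≤ nk
    · have h1 : (1 : ℝ) ≤ (q + 1 : ℕ) := by exact_mod_cast Nat.one_le_iff_ne_zero.mpr (by omega)
      calc ‖∑ i ∈ S, v i‖ ≤ D := hblock S h0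
        _ = 1 * D := (one_mul D).symm
        _ ≤ (q + 1 : ℕ) * D := mul_le_mul_of_nonneg_right h1 hD
    · push_neg at h0
      obtain ⟨S₁, hsub, hcard⟩ := Finset.exists_subset_card_eq h0.le
      have hsplit : ∑ i ∈ S, v i = ∑ i ∈ S \ S₁, v i + ∑ i ∈ S₁, v i :=
        (Finset.sum_sdiff hsub).symm
      have hcard2 : (S \ S₁).card ≤ q * nk := by
        rw [Finset.card_sdiff_of_subset hsub, hcard, Nat.succ_mul] at *
        omega
      calc ‖∑ i ∈ S, v i‖ = ‖∑ i ∈ S \ S₁, v i + ∑ i ∈ S₁, v i‖ := by rw [hsplit]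
        _ ≤ ‖∑ i ∈ S \ S₁, v i‖ + ‖∑ i ∈ S₁, v i‖ := norm_add_le _ _
        _ ≤ (q : ℝ) * D + D := add_le_add (ih _ hcard2) (hblock S₁ (hcard ▸ le_refl nk))
        _ = ((q + 1 : ℕ) : ℝ) * D := by push_cast; ring

/-- For a sequence with `l`-bounded gaps, a basis that is
`Cqt`-`n`-`t`-quasi-greedy, has the `n`-UL property with constants `C₁, C₂`, and is
`Δd`-`n`-democratic, is `t`-quasi-greedy with constant at most
`max (α₁α₂n₁) (Cqt(1+(l-1)C₁C₂Δd))`. -/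
theorem stmt8
    {X : Type*} [NormedAddCommGroup X] [NormedSpace ℝ X]
    (e : ℕ → X) (f : ℕ → X →L[ℝ] ℝ)
    (hbi : ∀ i j, f i (e j) = if i = j then (1 : ℝ) else 0)
    (α₁ α₂ : ℝ) (hα₁pos : 0 < α₁) (hα₂pos : 0 < α₂)
    (hα₁ : ∀ i, ‖e i‖ ≤ α₁) (hα₂ : ∀ i, ‖f i‖ ≤ α₂)
    (nseq : ℕ → ℕ) (hmono : StrictMono nseq) (hn1 : 0 < nseq 0)
    (l : ℕ) (hl : 2 ≤ l) (hgaps : ∀ k, nseq (k + 1) ≤ l * nseq k)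
    (t : ℝ) (ht0 : 0 < t) (ht1 : t ≤ 1)
    (Cqt : ℝ) (hCqt : 0 < Cqt)
    (hqg : ∀ (x : X) (A : Finset ℕ), (∃ k, A.card = nseq k) →
      (∀ i ∈ A, ∀ j ∉ A, t * |f j x| ≤ |f i x|) →
      ‖∑ i ∈ A, f i x • e i‖ ≤ Cqt * ‖x‖)
    (C₁ C₂ : ℝ) (hC₁ : 0 < C₁) (hC₂ : 0 < C₂)
    (hUL : ∀ (A : Finset ℕ) (hA : A.Nonempty) (a : ℕ → ℝ), (∃ k, A.card = nseq k) →
      C₁⁻¹ * (A.inf' hA fun i => |a i|) * ‖∑ i ∈ A, e i‖ ≤ ‖∑ i ∈ A, a i • e i‖ ∧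
      ‖∑ i ∈ A, a i • e i‖ ≤ C₂ * (A.sup' hA fun i => |a i|) * ‖∑ i ∈ A, e i‖)
    (Δd : ℝ) (hΔd : 0 < Δd)
    (hdem : ∀ (A B : Finset ℕ), A.card ≤ B.card →
      (∃ k, A.card = nseq k) → (∃ k, B.card = nseq k) →
      ‖∑ i ∈ A, e i‖ ≤ Δd * ‖∑ i ∈ B, e i‖) :
    ∀ (x : X) (A : Finset ℕ),
      (∀ i ∈ A, ∀ j ∉ A, t * |f j x| ≤ |f i x|) →
      ‖∑ i ∈ A, f i x • e i‖ ≤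
        max (α₁ * α₂ * (nseq 0 : ℝ)) (Cqt * (1 + ((l : ℝ) - 1) * C₁ * C₂ * Δd)) * ‖x‖ := by
  intro x A hA
  have hx0 : (0 : ℝ) ≤ ‖x‖ := norm_nonneg x
  rcases le_or_gt A.card (nseq 0) with hm | hm
  · -- small case: at most nseq 0 terms, use triangle inequality
    have hterm : ∀ i ∈ A, ‖f i x • e i‖ ≤ α₂ * ‖x‖ * α₁ := by
      intro i _
      rw [norm_smul, Real.norm_eq_abs]
      have h1 : |f i x| ≤ α₂ * ‖x‖ :=
        le_trans ((f i).le_opNorm x) (mul_le_mul_of_nonneg_right (hα₂ i) hx0)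
      exact mul_le_mul h1 (hα₁ i) (norm_nonneg _) (by positivity)
    have hcard : (A.card : ℝ) ≤ (nseq 0 : ℝ) := by exact_mod_cast hm
    calc ‖∑ i ∈ A, f i x • e i‖ ≤ ∑ i ∈ A, ‖f i x • e i‖ := norm_sum_le _ _
      _ ≤ A.card • (α₂ * ‖x‖ * α₁) := Finset.sum_le_card_nsmul A _ _ hterm
      _ = (A.card : ℝ) * (α₂ * ‖x‖ * α₁) := by rw [nsmul_eq_mul]
      _ ≤ (nseq 0 : ℝ) * (α₂ * ‖x‖ * α₁) :=
          mul_le_mul_of_nonneg_right hcard (by positivity)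
      _ = α₁ * α₂ * (nseq 0 : ℝ) * ‖x‖ := by ring
      _ ≤ max (α₁ * α₂ * (nseq 0 : ℝ)) (Cqt * (1 + ((l : ℝ) - 1) * C₁ * C₂ * Δd)) * ‖x‖ :=
          mul_le_mul_of_nonneg_right (le_max_left _ _) hx0
  · -- main case
    have hlow : ∀ j, nseq 0 + j ≤ nseq j := by
      intro j
      induction j with
      | zero => simp
      | succ j ih =>
        have h2 : nseq j < nseq (j + 1) := hmono (by omega)
        omega
    set k := Nat.findGreatest (fun j => nseq j ≤ A.card) A.card with hk_def
    have hk1 : nseq k ≤ A.card :=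
      Nat.findGreatest_spec (P := fun j => nseq j ≤ A.card) (m := 0) (Nat.zero_le _) hm.le
    have hk2 : A.card < nseq (k + 1) := by
      by_cases hc : k + 1 ≤ A.card
      · by_contra h
        push_neg at h
        exact Nat.findGreatest_is_greatest (Nat.lt_succ_self k) hc h
      · push_neg at hc
        have := hlow (k + 1)
        omega
    set nk := nseq k with hnk_def
    have hnk0 : 0 < nk := lt_of_lt_of_le hn1 (hmono.monotone (Nat.zero_le k))
    obtain ⟨A₁, hA₁A, hA₁card, htop⟩ :=
      stmt8_exists_top_subset (fun i => |f i x|) A nk hk1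
    have hA₁ne : A₁.Nonempty := Finset.card_pos.mp (hA₁card ▸ hnk0)
    set M := A₁.inf' hA₁ne (fun i => |f i x|) with hM_def
    have hM0 : (0 : ℝ) ≤ M := Finset.le_inf' hA₁ne _ (fun i _ => abs_nonneg _)
    -- A₁ is a t-greedy set for x
    have hgreedy₁ : ∀ i ∈ A₁, ∀ j ∉ A₁, t * |f j x| ≤ |f i x| := by
      intro i hi j hj
      by_cases hjA : j ∈ A
      · have h1 : |f j x| ≤ |f i x| := htop i hi j hjA hj
        have h2 : t * |f j x| ≤ 1 * |f j x| :=
          mul_le_mul_of_nonneg_right ht1 (abs_nonneg _)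
        rw [one_mul] at h2
        exact le_trans h2 h1
      · exact hA i (hA₁A hi) j hjA
    have hPA1 : ‖∑ i ∈ A₁, f i x • e i‖ ≤ Cqt * ‖x‖ := hqg x A₁ ⟨k, hA₁card⟩ hgreedy₁
    -- lower UL estimate on A₁
    have hMnorm : M * ‖∑ i ∈ A₁, e i‖ ≤ C₁ * ‖∑ i ∈ A₁, f i x • e i‖ := by
      have h := (hUL A₁ hA₁ne (fun i => f i x) ⟨k, hA₁card⟩).1
      have h' : C₁⁻¹ * (M * ‖∑ i ∈ A₁, e i‖) ≤ ‖∑ i ∈ A₁, f i x • e i‖ := by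
        rw [← mul_assoc]; exact h
      exact (inv_mul_le_iff₀ hC₁).mp h'
    set D := C₂ * M * (Δd * ‖∑ i ∈ A₁, e i‖) with hD_def
    have hD0 : (0 : ℝ) ≤ D := by positivity
    -- restriction of projection to A \ A₁
    set v : ℕ → X := fun i => if i ∈ A \ A₁ then f i x • e i else 0 with hv_def
    -- single block bound
    have hblock : ∀ S : Finset ℕ, S.card ≤ nk → ‖∑ i ∈ S, v i‖ ≤ D := by
      intro S hS
      set S' := S.filter (fun i => i ∈ A \ A₁) with hS'_def
      have hsum1 : ∑ i ∈ S, v i = ∑ i ∈ S', f i x • e i := by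
        rw [hS'_def, Finset.sum_filter]
      have hS'card : S'.card ≤ nk := le_trans (Finset.card_filter_le _ _) hS
      obtain ⟨T, hST, hTcard⟩ := Infinite.exists_superset_card_eq S' nk hS'card
      have hTne : T.Nonempty := Finset.card_pos.mp (hTcard ▸ hnk0)
      set a : ℕ → ℝ := fun i => if i ∈ S' then f i x else 0 with ha_def
      have hsum2 : ∑ i ∈ T, a i • e i = ∑ i ∈ S', f i x • e i := by
        rw [← Finset.sum_subset hST (fun i _ hi => by
          simp only [ha_def, if_neg hi, zero_smul])]
        exact Finset.sum_congr rfl (fun i hi => by simp only [ha_def, if_pos hi])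
      have hupper := (hUL T hTne a ⟨k, hTcard⟩).2
      have hsup : (T.sup' hTne fun i => |a i|) ≤ M := by
        apply Finset.sup'_le
        intro i _
        by_cases hi : i ∈ S'
        · simp only [ha_def, if_pos hi]
          have hiA : i ∈ A \ A₁ := (Finset.mem_filter.mp hi).2
          apply Finset.le_inf'
          intro b hb
          exact htop b hb i (Finset.mem_sdiff.mp hiA).1 (Finset.mem_sdiff.mp hiA).2
        · simp [ha_def, hi, hM0]
      have hdemT : ‖∑ i ∈ T, e i‖ ≤ Δd * ‖∑ i ∈ A₁, e i‖ :=
        hdem T A₁ (by rw [hTcard, hA₁card]) ⟨k, hTcard⟩ ⟨k, hA₁card⟩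
      obtain ⟨i0, hi0⟩ := hTne.exists_mem
      have hsup0 : (0 : ℝ) ≤ T.sup' hTne fun i => |a i| :=
        le_trans (abs_nonneg (a i0)) (Finset.le_sup' (fun i => |a i|) hi0)
      calc ‖∑ i ∈ S, v i‖ = ‖∑ i ∈ T, a i • e i‖ := by rw [hsum1, hsum2]
        _ ≤ C₂ * (T.sup' hTne fun i => |a i|) * ‖∑ i ∈ T, e i‖ := hupper
        _ ≤ C₂ * M * ‖∑ i ∈ T, e i‖ := by
            apply mul_le_mul_of_nonneg_right _ (norm_nonneg _)
            exact mul_le_mul_of_nonneg_left hsup hC₂.le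
        _ ≤ C₂ * M * (Δd * ‖∑ i ∈ A₁, e i‖) :=
            mul_le_mul_of_nonneg_left hdemT (by positivity)
    -- count of blocks
    have hA₂card : (A \ A₁).card ≤ (l - 1) * nk := by
      rw [Finset.card_sdiff_of_subset hA₁A, hA₁card]
      have h1 : A.card < l * nk := lt_of_lt_of_le hk2 (hgaps k)
      have h2 : (l - 1) * nk = l * nk - nk := by
        rw [Nat.sub_one_mul]
      omega
    have hA₂bound : ‖∑ i ∈ A \ A₁, v i‖ ≤ ((l - 1 : ℕ) : ℝ) * D :=
      stmt8_block_bound v nk D hD0 hblock (l - 1) (A \ A₁) hA₂card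
    have hsumv : ∑ i ∈ A \ A₁, v i = ∑ i ∈ A \ A₁, f i x • e i :=
      Finset.sum_congr rfl (fun i hi => by simp only [hv_def]; exact if_pos hi)
    have hsplit : ∑ i ∈ A, f i x • e i
        = ∑ i ∈ A \ A₁, f i x • e i + ∑ i ∈ A₁, f i x • e i :=
      (Finset.sum_sdiff hA₁A).symm
    have hcastl : ((l - 1 : ℕ) : ℝ) = (l : ℝ) - 1 := by
      have : (1 : ℕ) ≤ l := by omega
      push_cast [this]
      ring
    have hDb : D ≤ C₂ * Δd * (C₁ * (Cqt * ‖x‖)) := by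
      have h1 : M * ‖∑ i ∈ A₁, e i‖ ≤ C₁ * (Cqt * ‖x‖) :=
        le_trans hMnorm (mul_le_mul_of_nonneg_left hPA1 hC₁.le)
      calc D = C₂ * Δd * (M * ‖∑ i ∈ A₁, e i‖) := by rw [hD_def]; ring
        _ ≤ C₂ * Δd * (C₁ * (Cqt * ‖x‖)) :=
            mul_le_mul_of_nonneg_left h1 (by positivity)
    have hl1 : (0 : ℝ) ≤ (l : ℝ) - 1 := by
      have : (2 : ℝ) ≤ (l : ℝ) := by exact_mod_cast hl
      linarith
    calc ‖∑ i ∈ A, f i x • e i‖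
        = ‖∑ i ∈ A \ A₁, f i x • e i + ∑ i ∈ A₁, f i x • e i‖ := by rw [hsplit]
      _ ≤ ‖∑ i ∈ A \ A₁, f i x • e i‖ + ‖∑ i ∈ A₁, f i x • e i‖ := norm_add_le _ _
      _ ≤ ((l : ℝ) - 1) * D + Cqt * ‖x‖ := by
          rw [← hcastl, ← hsumv]
          exact add_le_add hA₂bound hPA1
      _ ≤ ((l : ℝ) - 1) * (C₂ * Δd * (C₁ * (Cqt * ‖x‖))) + Cqt * ‖x‖ :=
          add_le_add (mul_le_mul_of_nonneg_left hDb hl1) (le_refl _)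
      _ = Cqt * (1 + ((l : ℝ) - 1) * C₁ * C₂ * Δd) * ‖x‖ := by ring
      _ ≤ max (α₁ * α₂ * (nseq 0 : ℝ)) (Cqt * (1 + ((l : ℝ) - 1) * C₁ * C₂ * Δd)) * ‖x‖ :=
          mul_le_mul_of_nonneg_right (le_max_right _ _) hx0
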